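/- Let n and d be positive integers, ℓ a Kupisch series of type Ã_{n-1}, and f(i) = i - ℓ(i) - d + 1. Let x = (x_1, …, x_{d+1}) ∈ os_ℓ^{d+1} be such that f(x_1) < f(x_2) < ⋯ < f(x_{d+1}) < x_1. Then (f(x_1), f(x_2), …, f(x_{d+1})) ∈ os_ℓ^{d+1}. -/

import Mathlib

/-- if `x ∈ os_ℓ^{d+1}` and `f x₁ < f x₂ < ⋯ < f x_{d+1} < x₁`,
then `(f x₁, …, f x_{d+1}) ∈ os_ℓ^{d+1}`.  Here members of `os_ℓ^{d+1}` are
strictly increasing `x : Fin (d+1) → ℤ` with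
`x_last - x_0 + 1 ≤ ℓ (x_last) + d`. -/
theorem f_of_os_mem_os (n d : ℕ) (hn : 0 < n) (hd : 0 < d) (ℓ : ℤ → ℤ)
    (hK1 : ∀ i : ℤ, 1 ≤ ℓ i) (hK2 : ∀ i : ℤ, ℓ i ≤ ℓ (i - 1) + 1)
    (hKper : ∀ i : ℤ, ℓ (i + n) = ℓ i)
    (f : ℤ → ℤ) (hf : ∀ i : ℤ, f i = i - ℓ i - d + 1)
    (x : Fin (d + 1) → ℤ) (hxmono : StrictMono x)
    (hxos : x (Fin.last d) - x 0 + 1 ≤ ℓ (x (Fin.last d)) + d)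
    (hfxmono : StrictMono (fun i => f (x i)))
    (hfxlt : f (x (Fin.last d)) < x 0) :
    StrictMono (fun i => f (x i)) ∧
      f (x (Fin.last d)) - f (x 0) + 1 ≤ ℓ (f (x (Fin.last d))) + d := by
  refine ⟨hfxmono, ?_⟩
  have gmono : ∀ i j : ℤ, i ≤ j → i - ℓ i ≤ j - ℓ j := by
    intro i j hij
    refine Int.le_induction (m := i) (motive := fun j _ => i - ℓ i ≤ j - ℓ j) ?_ ?_ j hij
    · exact le_refl _
    · intro j hij ih
      have h := hK2 (j + 1)
      rw [add_sub_cancel_right] at h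
      omega
  have h2 := gmono _ _ (le_of_lt hfxlt)
  have e1 := hf (x 0)
  have e2 := hf (x (Fin.last d))
  omega
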